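/- If a uniformly locally bounded space X is connected as a topological space, then its bornology is connected: the union of any two bounded sets is bounded. -/

import Mathlib

open Filter Set

/-- A bornology on `X` (paper's convention): contains singletons, closed under
subsets, and under unions of two intersecting members. -/
structure IsBornology (X : Type*) (𝔅 : Set (Set X)) : Prop where
  singleton_mem : ∀ x : X, {x} ∈ 𝔅
  mem_of_subset : ∀ A ∈ 𝔅, ∀ B : Set X, B ⊆ A → B ∈ 𝔅
  union_mem : ∀ A ∈ 𝔅, ∀ B ∈ 𝔅, (A ∩ B).Nonempty → A ∪ B ∈ 𝔅

/-- The image `E[A] = {y | ∃ x ∈ A, (x, y) ∈ E}` of a set under an entourage. -/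
def entImage {X : Type*} (E : Set (X × X)) (A : Set X) : Set X :=
  {y | ∃ x ∈ A, (x, y) ∈ E}

/-- A uniformly locally bounded space: a uniform space with a bornology admitting
a bounded uniform entourage `E` (i.e. `E[B]` is bounded for every bounded `B`). -/
structure IsULB (X : Type*) [UniformSpace X] (𝔅 : Set (Set X)) : Prop where
  born : IsBornology X 𝔅
  bounded_entourage : ∃ E ∈ uniformity X, ∀ A ∈ 𝔅, entImage E A ∈ 𝔅

/-- If a uniformly locally bounded space is connected as a topological space, then
its bornology is connected: the union of any two bounded sets is bounded. -/
theorem bornology_connected_of_connectedSpace {X : Type*} [UniformSpace X]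
    {𝔅 : Set (Set X)} (h : IsULB X 𝔅) [ConnectedSpace X] :
    ∀ A ∈ 𝔅, ∀ B ∈ 𝔅, A ∪ B ∈ 𝔅 := by
  intro A hA B hB
  rcases A.eq_empty_or_nonempty with rfl | ⟨a, ha⟩
  · exact h.born.mem_of_subset B hB _ (by simp)
  rcases B.eq_empty_or_nonempty with rfl | ⟨b, hb⟩
  · exact h.born.mem_of_subset A hA _ (by simp)
  obtain ⟨E, hE, hEb⟩ := h.bounded_entourage
  set F := SetRel.symmetrize E with hF
  have hFu : F ∈ uniformity X := symmetrize_mem_uniformity hE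
  have hFsymm : F.IsSymm := SetRel.isSymm_symmetrize (R := E)
  have hFrefl : ∀ x : X, (x, x) ∈ F := fun x => refl_mem_uniformity hFu
  have hFsub : F ⊆ E := SetRel.symmetrize_subset_self
  have hFb : ∀ C ∈ 𝔅, entImage F C ∈ 𝔅 := by
    intro C hC
    refine h.born.mem_of_subset _ (hEb C hC) _ ?_
    rintro y ⟨x, hx, hxy⟩
    exact ⟨x, hx, hFsub hxy⟩
  set C : ℕ → Set X := fun n => (entImage F)^[n] A with hCdef
  have hCsucc : ∀ n, C (n+1) = entImage F (C n) := fun n =>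
    Function.iterate_succ_apply' _ _ _
  have hCmem : ∀ n, C n ∈ 𝔅 := by
    intro n; induction n with
    | zero => exact hA
    | succ n ih => rw [hCsucc]; exact hFb _ ih
  have hCmono : ∀ n, C n ⊆ C (n+1) := by
    intro n y hy; rw [hCsucc]; exact ⟨y, hy, hFrefl y⟩
  set S := ⋃ n, C n with hS
  have hSopen : IsOpen S := by
    rw [isOpen_iff_mem_nhds]
    intro y hy
    obtain ⟨n, hn⟩ := mem_iUnion.1 hy
    filter_upwards [UniformSpace.ball_mem_nhds y hFu] with z hz
    exact mem_iUnion.2 ⟨n+1, by rw [hCsucc]; exact ⟨y, hn, hz⟩⟩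
  have hSclosed : IsClosed S := by
    rw [← isOpen_compl_iff, isOpen_iff_mem_nhds]
    intro y hy
    filter_upwards [UniformSpace.ball_mem_nhds y hFu] with z hz hzS
    obtain ⟨n, hn⟩ := mem_iUnion.1 hzS
    exact hy (mem_iUnion.2 ⟨n+1, by
      rw [hCsucc]; exact ⟨z, hn, SetRel.symm (R := F) hz⟩⟩)
  have hSne : S.Nonempty := ⟨a, mem_iUnion.2 ⟨0, ha⟩⟩
  have hSuniv : S = univ := by
    rcases isClopen_iff.1 ⟨hSclosed, hSopen⟩ with h' | h'
    · exact absurd h' hSne.ne_empty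
    · exact h'
  have hbS : b ∈ S := hSuniv ▸ mem_univ b
  obtain ⟨n, hbn⟩ := mem_iUnion.1 hbS
  have hAsub : ∀ m, A ⊆ C m := by
    intro m; induction m with
    | zero => exact subset_rfl
    | succ m ih => exact ih.trans (hCmono m)
  have hCB : C n ∪ B ∈ 𝔅 := h.born.union_mem _ (hCmem n) _ hB ⟨b, hbn, hb⟩
  exact h.born.mem_of_subset _ hCB _ (union_subset_union_left B (hAsub n))
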